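/- Let A be an abelian group and let (H_w)_{w ∈ W} be a family of subgroups indexed by a prefix-free set W of binary strings, obtained as follows: there are injective endomorphisms φ₀, φ₁ of A with A = φ₀(A) ⊕ φ₁(A) possible to iterate, i.e., φ₀(A) ∩ φ₁(A) = 0, and H_w = φ_w(H) for a fixed subgroup H ≤ A, where φ_w is the composition of φ's along w. Then the sum Σ_{w ∈ W} H_w is direct. -/

import Mathlib

open Finset


/-- Composition `φ_{i₁} ∘ ⋯ ∘ φ_{i_ℓ}` of a pair of additive endomorphisms along a
binary string. -/
def addCompWord {A : Type*} [AddCommGroup A] (φ : Bool → (A →+ A)) : List Bool → (A →+ A)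
  | [] => AddMonoidHom.id A
  | i :: w => (φ i).comp (addCompWord φ w)

lemma core {A : Type*} [AddCommGroup A] (φ : Bool → (A →+ A))
    (hinj : ∀ i, Function.Injective (φ i))
    (htriv : ∀ x y : A, φ false x = φ true y → φ false x = 0)
    (H : AddSubgroup A) :
    ∀ (n : ℕ) (s : Finset (List Bool)), (∑ w ∈ s, w.length) ≤ n →
      (∀ l ∈ s, ∀ l' ∈ s, l <+: l' → l = l') →
      ∀ g : List Bool → A, (∀ w ∈ s, g w ∈ AddSubgroup.map (addCompWord φ w) H) →
      ∑ w ∈ s, g w = 0 → ∀ w ∈ s, g w = 0 := by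
  intro n
  induction n using Nat.strong_induction_on with
  | _ n ih =>
  intro s hlen hpf g hmem hsum w hw
  classical
  by_cases hnil : [] ∈ s
  · have hall : ∀ l ∈ s, l = [] := fun l hl => (hpf [] hnil l hl (List.nil_prefix)).symm
    have hseq : s = {[]} := Finset.eq_singleton_iff_unique_mem.mpr ⟨hnil, hall⟩
    subst hseq
    simp only [Finset.mem_singleton] at hw
    subst hw
    simpa using hsum
  · have hcons : ∀ l ∈ s, l ≠ [] := fun l hl h => hnil (h ▸ hl)
    set S : Bool → Finset (List Bool) := fun i => s.filter (fun w => w.head? = some i) with hS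
    have hHead : ∀ i : Bool, ∀ l ∈ S i, l = i :: l.tail := by
      intro i l hl
      rw [hS, Finset.mem_filter] at hl
      rcases List.exists_cons_of_ne_nil (hcons l hl.1) with ⟨a, t, rfl⟩
      simp only [List.head?_cons, Option.some.injEq] at hl
      simp [hl.2]
    have hSsub : ∀ i, S i ⊆ s := fun i => Finset.filter_subset _ _
    have heq : s.filter (fun w => ¬ (w.head? = some false))
        = s.filter (fun w => w.head? = some true) := by
      apply Finset.filter_congr
      intro l hl
      rcases List.exists_cons_of_ne_nil (hcons l hl) with ⟨a, t, rfl⟩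
      cases a <;> simp
    have hSplit : ∑ w ∈ S false, g w + ∑ w ∈ S true, g w = ∑ w ∈ s, g w := by
      have h := Finset.sum_filter_add_sum_filter_not s (fun w => w.head? = some false) g
      rw [heq] at h
      exact h
    -- tails
    set T : Bool → Finset (List Bool) := fun i => (S i).image List.tail with hT
    have hinjOn : ∀ i : Bool, ∀ x ∈ S i, ∀ y ∈ S i, x.tail = y.tail → x = y := by
      intro i x hx y hy hxy
      rw [hHead i x hx, hHead i y hy, hxy]
    have hTsum : ∀ (i : Bool) (G : List Bool → A),
        ∑ t ∈ T i, G t = ∑ w ∈ S i, G w.tail := fun i G =>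
      Finset.sum_image (hinjOn i)
    -- choose preimages
    set y : Bool → List Bool → A := fun i t =>
      if h : ∃ z ∈ AddSubgroup.map (addCompWord φ t) H, φ i z = g (i :: t)
      then h.choose else 0 with hy
    have hyspec : ∀ (i : Bool), ∀ t ∈ T i,
        y i t ∈ AddSubgroup.map (addCompWord φ t) H ∧ φ i (y i t) = g (i :: t) := by
      intro i t ht
      rw [hT, Finset.mem_image] at ht
      rcases ht with ⟨l, hl, rfl⟩
      have hl' : l = i :: l.tail := hHead i l hl
      have hmem' := hmem l (hSsub i hl)
      rw [hl'] at hmem'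
      have : g (i :: l.tail) ∈ (AddSubgroup.map (addCompWord φ l.tail) H).map (φ i) := by
        rw [AddSubgroup.map_map]
        exact hmem'
      rcases AddSubgroup.mem_map.mp this with ⟨z, hz, hz'⟩
      have hex : ∃ z ∈ AddSubgroup.map (addCompWord φ l.tail) H, φ i z = g (i :: l.tail) :=
        ⟨z, hz, hz'⟩
      rw [hy]
      simp only [hex, dif_pos]
      exact ⟨hex.choose_spec.1, hex.choose_spec.2⟩
    -- sums of the y's
    have hphiSum : ∀ i : Bool, φ i (∑ t ∈ T i, y i t) = ∑ w ∈ S i, g w := by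
      intro i
      rw [map_sum, hTsum i (fun t => φ i (y i t))]
      apply Finset.sum_congr rfl
      intro l hl
      have ht : l.tail ∈ T i := Finset.mem_image_of_mem _ hl
      rw [(hyspec i l.tail ht).2, ← hHead i l hl]
    have key : φ false (∑ t ∈ T false, y false t) + φ true (∑ t ∈ T true, y true t) = 0 := by
      rw [hphiSum, hphiSum, hSplit, hsum]
    have h0 : φ false (∑ t ∈ T false, y false t) = 0 := by
      apply htriv _ (-(∑ t ∈ T true, y true t))
      rw [map_neg]
      exact eq_neg_of_add_eq_zero_left key
    have ha : ∑ t ∈ T false, y false t = 0 := by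
      apply hinj false
      rw [h0, map_zero]
    have hb : ∑ t ∈ T true, y true t = 0 := by
      apply hinj true
      rw [map_zero]
      rw [h0, zero_add] at key
      exact key
    have hsum0 : ∀ i : Bool, ∑ t ∈ T i, y i t = 0 := by
      intro i; cases i
      · exact ha
      · exact hb
    -- prefix-freeness of the tails
    have hpfT : ∀ i : Bool, ∀ l ∈ T i, ∀ l' ∈ T i, l <+: l' → l = l' := by
      intro i l hl l' hl' hpre
      rw [hT, Finset.mem_image] at hl hl'
      rcases hl with ⟨a, ha', rfl⟩
      rcases hl' with ⟨b, hb', rfl⟩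
      have h1 : (i :: a.tail) <+: (i :: b.tail) := by
        rw [List.cons_prefix_cons]; exact ⟨rfl, hpre⟩
      have h2 := hpf (i :: a.tail) (by rw [← hHead i a ha']; exact hSsub i ha')
        (i :: b.tail) (by rw [← hHead i b hb']; exact hSsub i hb') h1
      simpa using h2
    -- the y's vanish
    have hzero : ∀ i : Bool, ∀ t ∈ T i, y i t = 0 := by
      intro i t ht
      have hSne : (S i).Nonempty := by
        rw [hT, Finset.mem_image] at ht
        rcases ht with ⟨l, hl, -⟩
        exact ⟨l, hl⟩
      have hcard : 1 ≤ (S i).card := Finset.card_pos.mpr hSne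
      have hTlen : ∑ t ∈ T i, t.length = ∑ w ∈ S i, w.tail.length :=
        Finset.sum_image (hinjOn i)
      have hSlen : ∑ w ∈ S i, w.length = ∑ w ∈ S i, (w.tail.length + 1) := by
        apply Finset.sum_congr rfl
        intro l hl
        conv_lhs => rw [hHead i l hl]
        simp
      have hSle : ∑ w ∈ S i, w.length ≤ n :=
        le_trans (Finset.sum_le_sum_of_subset (hSsub i)) hlen
      have hlt : ∑ t ∈ T i, t.length < n := by
        rw [Finset.sum_add_distrib, Finset.sum_const, smul_eq_mul, mul_one] at hSlen
        omega
      exact ih _ hlt (T i) le_rfl (hpfT i) (y i)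
        (fun t' ht' => (hyspec i t' ht').1) (hsum0 i) t ht
    -- conclude
    rcases List.exists_cons_of_ne_nil (hcons w hw) with ⟨a, t, rfl⟩
    have hwS : (a :: t) ∈ S a := by
      rw [hS, Finset.mem_filter]
      exact ⟨hw, by simp⟩
    have htT : t ∈ T a := by
      rw [hT, Finset.mem_image]
      exact ⟨a :: t, hwS, rfl⟩
    have := (hyspec a t htT).2
    rw [hzero a t htT, map_zero] at this
    exact this.symm

/-- Prefix-free addressing through a pair of injective endomorphisms with independent
images yields an internal direct sum: if `φ₀, φ₁` are injective endomorphisms of an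
abelian group `A` with `φ₀(A) ∩ φ₁(A) = 0`, `W` is a prefix-free set of binary strings,
and `H_w = φ_w(H)` for a fixed subgroup `H ≤ A`, then the sum `Σ_{w ∈ W} H_w` is direct. -/
theorem prefixFree_sum_independent {A : Type*} [AddCommGroup A] (φ : Bool → (A →+ A))
    (hinj : ∀ i, Function.Injective (φ i))
    (htriv : ∀ x y : A, φ false x = φ true y → φ false x = 0)
    (H : AddSubgroup A) (W : Set (List Bool))
    (hW : ∀ l ∈ W, ∀ l' ∈ W, l <+: l' → l = l') :
    iSupIndep (fun w : W => AddSubgroup.map (addCompWord φ (w : List Bool)) H) := by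
  classical
  apply iSupIndep_of_dfinsuppSumAddHom_injective'
  rw [injective_iff_map_eq_zero]
  intro v hv
  rw [DFinsupp.sumAddHom_apply] at hv
  have hv' : ∑ i ∈ v.support, ((v i : A)) = 0 := hv
  set s : Finset (List Bool) := v.support.image Subtype.val with hs
  set g : List Bool → A := fun w => if h : w ∈ W then (v ⟨w, h⟩ : A) else 0 with hg
  have hvalInj : ∀ x ∈ v.support, ∀ y ∈ v.support, (x : List Bool) = y → x = y :=
    fun x _ y _ h => Subtype.ext h
  have hgsum : ∑ w ∈ s, g w = 0 := by
    rw [hs, Finset.sum_image hvalInj]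
    rw [← hv']
    apply Finset.sum_congr rfl
    intro i _
    simp [hg, i.2]
  have hzero := core φ hinj htriv H (∑ w ∈ s, w.length) s le_rfl
    (fun l hl l' hl' hpre => by
      rw [hs, Finset.mem_image] at hl hl'
      rcases hl with ⟨a, -, rfl⟩
      rcases hl' with ⟨b, -, rfl⟩
      exact hW a a.2 b b.2 hpre)
    g
    (fun w hw => by
      rw [hs, Finset.mem_image] at hw
      rcases hw with ⟨a, -, rfl⟩
      simpa [hg, a.2] using (v a).2)
    hgsum
  ext i
  by_cases hi : i ∈ v.support
  · have hmem : (i : List Bool) ∈ s := Finset.mem_image_of_mem _ hi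
    have := hzero _ hmem
    simp only [hg, i.2, dif_pos] at this
    simpa using this
  · rw [DFinsupp.notMem_support_iff] at hi
    simp [hi]
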